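/- Let p and q be integers with 0 < p < q, gcd(p,q) = 1, p even, and q odd. Then there exists a unique nonempty list (a_1, …, a_{2n}) of even nonzero integers (uniqueness includes the length 2n) such that the continued fraction value [a_1, …, a_{2n}] equals p/q. -/

import Mathlib

/-- The continued fraction value `[a₁, …, aₙ] = 1/(a₁ + 1/(a₂ + ⋯ + 1/aₙ))` of a
list of integers, defined recursively with `[] = 0`, using the total division of `ℚ`. -/
def cfVal : List ℤ → ℚ
  | [] => 0
  | a :: l => 1 / ((a : ℚ) + cfVal l)


lemma two_le_abs_cast {a : ℤ} (he : Even a) (h0 : a ≠ 0) : (2:ℚ) ≤ |(a:ℚ)| := by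
  have h : (2:ℤ) ≤ |a| := by
    rcases he with ⟨k, rfl⟩
    rcases abs_cases (k+k) with ⟨h1,_⟩|⟨h1,_⟩ <;> omega
  calc (2:ℚ) = ((2:ℤ):ℚ) := by norm_num
    _ ≤ ((|a|:ℤ):ℚ) := by exact_mod_cast h
    _ = |(a:ℚ)| := by push_cast; ring

lemma cfVal_bound : ∀ L : List ℤ, (∀ a ∈ L, Even a ∧ a ≠ 0) →
    |cfVal L| < 1 ∧ (L ≠ [] → cfVal L ≠ 0) := by
  intro L
  induction L with
  | nil => simp [cfVal]
  | cons a l ih =>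
    intro h
    obtain ⟨he, h0⟩ := h a (List.mem_cons_self)
    have hl := ih (fun b hb => h b (List.mem_cons_of_mem _ hb))
    have hv : |cfVal l| < 1 := hl.1
    have ha2 : (2:ℚ) ≤ |(a:ℚ)| := two_le_abs_cast he h0
    have hd : 1 < |(a:ℚ) + cfVal l| := by
      have h1 : |(a:ℚ)| ≤ |(a:ℚ) + cfVal l| + |cfVal l| := by
        have := abs_add_le ((a:ℚ) + cfVal l) (-(cfVal l))
        simpa using this
      linarith
    have hdne : (a:ℚ) + cfVal l ≠ 0 := by
      intro h'; rw [h'] at hd; simp at hd; linarith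
    constructor
    · show |1 / ((a:ℚ) + cfVal l)| < 1
      rw [abs_div, abs_one, div_lt_one (by linarith [abs_nonneg ((a:ℚ) + cfVal l)])]
      exact hd
    · intro _
      show 1 / ((a:ℚ) + cfVal l) ≠ 0
      exact one_div_ne_zero hdne

lemma cfVal_inj : ∀ L L' : List ℤ, (∀ a ∈ L, Even a ∧ a ≠ 0) →
    (∀ a ∈ L', Even a ∧ a ≠ 0) → cfVal L = cfVal L' → L = L' := by
  intro L
  induction L with
  | nil =>
    intro L' _ h' heq
    cases L' with
    | nil => rfl
    | cons a l =>
      exfalso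
      have := (cfVal_bound _ h').2 (by simp)
      simp only [cfVal] at heq
      exact this heq.symm
  | cons a l ih =>
    intro L' h h' heq
    cases L' with
    | nil =>
      exfalso
      have := (cfVal_bound _ h).2 (by simp)
      simp only [cfVal] at heq
      exact this heq
    | cons a' l' =>
      have hne : cfVal (a::l) ≠ 0 := (cfVal_bound _ h).2 (by simp)
      have hx : (a:ℚ) + cfVal l ≠ 0 := by
        intro h0; apply hne; show 1 / ((a:ℚ) + cfVal l) = 0; rw [h0]; simp
      have hx' : (a':ℚ) + cfVal l' ≠ 0 := by
        have hne' : cfVal (a'::l') ≠ 0 := (cfVal_bound _ h').2 (by simp)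
        intro h0; apply hne'; show 1 / ((a':ℚ) + cfVal l') = 0; rw [h0]; simp
      have heq2 : (a:ℚ) + cfVal l = (a':ℚ) + cfVal l' := by
        have h1 : 1 / ((a:ℚ) + cfVal l) = 1 / ((a':ℚ) + cfVal l') := heq
        field_simp at h1
        linarith
      have hvl : |cfVal l| < 1 := (cfVal_bound _ (fun b hb => h b (List.mem_cons_of_mem _ hb))).1
      have hvl' : |cfVal l'| < 1 := (cfVal_bound _ (fun b hb => h' b (List.mem_cons_of_mem _ hb))).1
      have haa : a = a' := by
        have hd : |(a:ℚ) - (a':ℚ)| < 2 := by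
          have h2 : (a:ℚ) - (a':ℚ) = cfVal l' - cfVal l := by linarith
          rw [h2]
          calc |cfVal l' - cfVal l| ≤ |cfVal l'| + |cfVal l| := abs_sub _ _
            _ < 2 := by linarith
        have hdi : |a - a'| < 2 := by
          have h3 : |((a - a' : ℤ) : ℚ)| < 2 := by push_cast; exact hd
          rw [← Int.cast_abs] at h3
          exact_mod_cast h3
        have hev : Even (a - a') :=
          ((h a (List.mem_cons_self)).1).sub ((h' a' (List.mem_cons_self)).1)
        rcases hev with ⟨k, hk⟩
        rcases abs_cases (a - a') with ⟨h4,_⟩|⟨h4,_⟩ <;> omega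
      subst haa
      have hveq : cfVal l = cfVal l' := by linarith
      rw [ih l' (fun b hb => h b (List.mem_cons_of_mem _ hb))
        (fun b hb => h' b (List.mem_cons_of_mem _ hb)) hveq]

lemma exists_even_quot (r s : ℤ) (hr : r ≠ 0) (hpar : Odd (r + s)) :
    ∃ a : ℤ, Even a ∧ |s - a * r| < |r| := by
  obtain ⟨a, hae, hle⟩ : ∃ a : ℤ, Even a ∧ |s - a * r| ≤ |r| := by
    have hu0 : 0 < |r| := abs_pos.mpr hr
    set u := |r| with hu
    set k := s / (2*u) with hk
    set m := s % (2*u) with hm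
    have hsm : 2*u*k + m = s := Int.mul_ediv_add_emod s (2*u)
    have hm0 : 0 ≤ m := Int.emod_nonneg s (by positivity)
    have hm1 : m < 2*u := Int.emod_lt_of_pos s (by positivity)
    have hsign : (0 < r ∧ u = r) ∨ (r < 0 ∧ u = -r) := by
      rcases abs_cases r with ⟨h2,h3⟩|⟨h2,h3⟩
      · left; exact ⟨by omega, h2⟩
      · right; exact ⟨by omega, h2⟩
    by_cases hcase : m ≤ u
    · refine ⟨if 0 < r then 2*k else -(2*k), ?_, ?_⟩
      · rcases hsign with ⟨h1,_⟩|⟨h1,_⟩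
        · rw [if_pos h1]; exact ⟨k, by ring⟩
        · rw [if_neg (by omega)]; exact ⟨-k, by ring⟩
      · have har : (if 0 < r then 2*k else -(2*k)) * r = 2*u*k := by
          rcases hsign with ⟨h1,h2⟩|⟨h1,h2⟩
          · rw [if_pos h1, ← h2]; ring
          · rw [if_neg (by omega)]; rw [(by omega : r = -u)]; ring
        rw [har, abs_le]
        constructor <;> omega
    · refine ⟨if 0 < r then 2*k+2 else -(2*k+2), ?_, ?_⟩
      · rcases hsign with ⟨h1,_⟩|⟨h1,_⟩
        · rw [if_pos h1]; exact ⟨k+1, by ring⟩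
        · rw [if_neg (by omega)]; exact ⟨-(k+1), by ring⟩
      · have har : (if 0 < r then 2*k+2 else -(2*k+2)) * r = 2*u*k + 2*u := by
          rcases hsign with ⟨h1,h2⟩|⟨h1,h2⟩
          · rw [if_pos h1, ← h2]; ring
          · rw [if_neg (by omega)]; rw [(by omega : r = -u)]; ring
        rw [har, abs_le]
        constructor <;> omega
  refine ⟨a, hae, lt_of_le_of_ne hle ?_⟩
  intro habs
  have hev : Even (a * r) := hae.mul_right r
  rcases hev with ⟨c, hc⟩
  rcases hpar with ⟨d, hd⟩
  rcases (abs_eq (abs_nonneg r)).mp habs with h1 | h1 <;>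
    rcases abs_cases r with ⟨h2,_⟩|⟨h2,_⟩ <;> omega


lemma cf_step (a t r s : ℤ) (L' : List ℤ) (hae : Even a) (ha0 : a ≠ 0) (hr : r ≠ 0)
    (hs : s ≠ 0) (ht : t = s - a * r) (hpar : Odd (r + s))
    (hLne : L' ≠ []) (hmem : ∀ b ∈ L', Even b ∧ b ≠ 0)
    (hlen : Even L'.length ↔ Even t) (hval : cfVal L' = (t:ℚ)/(r:ℚ)) :
    (a :: L') ≠ [] ∧ (∀ b ∈ a :: L', Even b ∧ b ≠ 0) ∧
      (Even (a :: L').length ↔ Even r) ∧ cfVal (a :: L') = (r:ℚ)/(s:ℚ) := by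
  obtain ⟨c, hc⟩ : Even (a * r) := hae.mul_right r
  obtain ⟨d, hd⟩ := hpar
  have hrq : (r:ℚ) ≠ 0 := Int.cast_ne_zero.mpr hr
  refine ⟨by simp, ?_, ?_, ?_⟩
  · intro b hb
    rcases List.mem_cons.mp hb with rfl | hb
    · exact ⟨hae, ha0⟩
    · exact hmem b hb
  · simp only [List.length_cons, Nat.even_add_one]
    rw [hlen, Int.even_iff, Int.even_iff]
    omega
  · show 1 / ((a:ℚ) + cfVal L') = (r:ℚ)/(s:ℚ)
    rw [hval]
    have hint : (a:ℤ) * r + t = s := by omega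
    have h1 : (a:ℚ) + (t:ℚ)/(r:ℚ) = (s:ℚ)/(r:ℚ) := by
      rw [eq_div_iff hrq, add_mul, div_mul_cancel₀ _ hrq]
      exact_mod_cast hint
    rw [h1, one_div_div]

lemma cf_exists : ∀ n : ℕ, ∀ r s : ℤ, s.natAbs ≤ n → 0 < s → |r| < s → r ≠ 0 → Odd (r + s) →
    ∃ L : List ℤ, L ≠ [] ∧ (∀ a ∈ L, Even a ∧ a ≠ 0) ∧ (Even L.length ↔ Even r) ∧
      cfVal L = (r:ℚ)/(s:ℚ) := by
  intro n
  induction n with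
  | zero => intro r s hn hs _ _ _; omega
  | succ n ih =>
    intro r s hn hs hrs hr hpar
    obtain ⟨a, hae, hlt⟩ := exists_even_quot r s hr hpar
    set t := s - a * r with ht
    obtain ⟨c, hc⟩ : Even (a * r) := hae.mul_right r
    obtain ⟨d, hd⟩ := hpar
    have hrabs : -s < r ∧ r < s := abs_lt.mp hrs
    have hsign : (0 < r ∧ |r| = r) ∨ (r < 0 ∧ |r| = -r) := by
      rcases abs_cases r with ⟨h2,h3⟩|⟨h2,h3⟩
      · left; exact ⟨by omega, h2⟩
      · right; exact ⟨by omega, h2⟩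
    have htr : -|r| < t ∧ t < |r| := abs_lt.mp hlt
    have ha0 : a ≠ 0 := by
      intro h
      have h1 : t = s := by rw [ht, h]; ring
      rcases hsign with ⟨h3,h2⟩|⟨h3,h2⟩ <;> rw [h2] at htr <;> omega
    have hrq : (r:ℚ) ≠ 0 := Int.cast_ne_zero.mpr hr
    by_cases ht0 : t = 0
    · -- s = a * r
      have hse : s = a * r := by omega
      have hro : ¬ Even r := by
        rintro ⟨e, he⟩; omega
      refine ⟨[a], by simp, by simp [hae, ha0], ?_, ?_⟩
      · simp only [List.length_singleton]
        constructor
        · intro h; exact absurd h (by decide)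
        · intro h; exact absurd h hro
      · show 1 / ((a:ℚ) + cfVal []) = (r:ℚ)/(s:ℚ)
        simp only [cfVal, add_zero]
        rw [hse]
        push_cast
        rw [mul_comm, ← div_div, div_self hrq]
    · rcases hsign with ⟨hpos, habs⟩ | ⟨hneg, habs⟩
      · -- r > 0 : recurse with (t, r)
        have e1 : r.natAbs ≤ n := by omega
        have e2 : |t| < r := habs ▸ hlt
        have e3 : Odd (t + r) := ⟨d - c, by omega⟩
        obtain ⟨L', hLne, hmem, hlen, hval⟩ := ih t r e1 hpos e2 ht0 e3
        obtain ⟨_, h2, h3, h4⟩ := cf_step a t r s L' hae ha0 hr (by omega) rfl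
          ⟨d, hd⟩ hLne hmem hlen hval
        exact ⟨a :: L', by simp, h2, h3, h4⟩
      · -- r < 0 : recurse with (-t, -r)
        have e1 : (-r).natAbs ≤ n := by omega
        have e2 : |(-t)| < -r := by rw [abs_neg]; omega
        have e3 : Odd (-t + -r) := ⟨-(d - c) - 1, by omega⟩
        obtain ⟨L', hLne, hmem, hlen, hval⟩ := ih (-t) (-r) e1 (by omega) e2 (by omega) e3
        have hlen' : Even L'.length ↔ Even t := by rw [hlen, even_neg]
        have hval' : cfVal L' = (t:ℚ)/(r:ℚ) := by
          rw [hval]; push_cast; rw [neg_div_neg_eq]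
        obtain ⟨_, h2, h3, h4⟩ := cf_step a t r s L' hae ha0 hr (by omega) rfl
          ⟨d, hd⟩ hLne hmem hlen' hval'
        exact ⟨a :: L', by simp, h2, h3, h4⟩

/-- If `0 < p < q`, `gcd(p,q) = 1`, `p` is even and `q` is odd, then there is a unique
nonempty list `(a₁, …, a_{2n})` of even nonzero integers (of even length) whose continued
fraction value is `p/q`. -/
theorem stmt0 (p q : ℤ) (hp0 : 0 < p) (hpq : p < q) (hgcd : Int.gcd p q = 1)
    (hpe : Even p) (hqo : Odd q) :
    ∃! L : List ℤ, L ≠ [] ∧ (∀ a ∈ L, Even a ∧ a ≠ 0) ∧ Even L.length ∧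
      cfVal L = (p : ℚ) / (q : ℚ) := by
  obtain ⟨L, hLne, hmem, hlen, hval⟩ := cf_exists q.natAbs p q le_rfl (by omega)
    (by rw [abs_lt]; omega) (by omega) (hpe.add_odd hqo)
  refine ⟨L, ⟨hLne, hmem, hlen.mpr hpe, hval⟩, ?_⟩
  intro L' ⟨_, hmem', _, hval'⟩
  exact cfVal_inj L' L hmem' hmem (by rw [hval, hval'])
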